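/- Let T be a countable set, let τ and m be probability mass functions on T, and let 0 < α < 1 with ᾱ = 1 − α. Assume α√(τ(t)) + ᾱ√(m(t)) > 0 for all t and that D = Σ_t (τ(t) − m(t))² / (α√(τ(t)) + ᾱ√(m(t)))² is finite. Then the supremum of Σ_t h(t)(τ(t) − m(t)) over all functions h : T → ℝ satisfying Σ_t h(t)²(α√(τ(t)) + ᾱ√(m(t)))² ≤ 1 equals √D, i.e., equals √2 times the blended weighted Hellinger distance BWHD_α(τ,m). -/

import Mathlib

/-- For probability mass functions `τ`, `m` on a countable set and
`0 < α < 1` with `ᾱ = 1 - α`, assuming `α√(τ t) + ᾱ√(m t) > 0` for all `t` and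
`D = Σ_t (τ t - m t)² / (α√(τ t) + ᾱ√(m t))²` finite, the supremum of
`Σ_t h t (τ t - m t)` over all `h` with `Σ_t h t² (α√(τ t) + ᾱ√(m t))² ≤ 1`
equals `√D`, i.e. `√2` times the blended weighted Hellinger distance `BWHD_α(τ,m)`. -/
private lemma bwhd_aux1 (a b s : ℝ) (hb : b ≠ 0) :
    a / (b * s) * (a * b) = a ^ 2 / s := by
  rcases eq_or_ne s 0 with rfl | hs
  · simp
  · field_simp

private lemma bwhd_aux2 (a b d : ℝ) (hb : b ≠ 0) (hd : 0 ≤ d) :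
    (a / (b * Real.sqrt d)) ^ 2 * b ^ 2 = a ^ 2 / d := by
  rcases eq_or_ne d 0 with rfl | hs
  · simp
  · have hsz : Real.sqrt d ≠ 0 := Real.sqrt_ne_zero'.mpr (lt_of_le_of_ne hd (Ne.symm hs))
    rw [div_pow, mul_pow, Real.sq_sqrt hd]
    field_simp

theorem bwhd_is_sup_of_linear_functional
    {T : Type*} [Countable T] (τ m : T → ℝ) (α : ℝ)
    (hα0 : 0 < α) (hα1 : α < 1)
    (hτ0 : ∀ t, 0 ≤ τ t) (hτ1 : (∑' t, τ t) = 1)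
    (hm0 : ∀ t, 0 ≤ m t) (hm1 : (∑' t, m t) = 1)
    (hw : ∀ t, 0 < α * Real.sqrt (τ t) + (1 - α) * Real.sqrt (m t))
    (hD : Summable fun t =>
      (τ t - m t) ^ 2 / (α * Real.sqrt (τ t) + (1 - α) * Real.sqrt (m t)) ^ 2) :
    sSup { r : ℝ | ∃ h : T → ℝ,
        Summable (fun t => h t * (τ t - m t)) ∧
        Summable (fun t =>
          (h t) ^ 2 * (α * Real.sqrt (τ t) + (1 - α) * Real.sqrt (m t)) ^ 2) ∧
        (∑' t, (h t) ^ 2 * (α * Real.sqrt (τ t) + (1 - α) * Real.sqrt (m t)) ^ 2) ≤ 1 ∧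
        r = ∑' t, h t * (τ t - m t) } =
      Real.sqrt (∑' t, (τ t - m t) ^ 2 /
        (α * Real.sqrt (τ t) + (1 - α) * Real.sqrt (m t)) ^ 2) ∧
    Real.sqrt (∑' t, (τ t - m t) ^ 2 /
        (α * Real.sqrt (τ t) + (1 - α) * Real.sqrt (m t)) ^ 2) =
      Real.sqrt 2 * Real.sqrt (∑' t, (τ t - m t) ^ 2 /
        (2 * (α * Real.sqrt (τ t) + (1 - α) * Real.sqrt (m t)) ^ 2)) := by
  set w : T → ℝ := fun t => α * Real.sqrt (τ t) + (1 - α) * Real.sqrt (m t) with hw_def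
  have hwne : ∀ t, w t ≠ 0 := fun t => (hw t).ne'
  set f : T → ℝ := fun t => (τ t - m t) / w t with hf_def
  have hfw : ∀ t, τ t - m t = f t * w t := fun t => (div_mul_cancel₀ _ (hwne t)).symm
  have hfsq : ∀ t, (τ t - m t) ^ 2 / (w t) ^ 2 = f t ^ 2 := fun t => (div_pow _ _ _).symm
  have hDf : Summable fun t => f t ^ 2 := hD.congr hfsq
  set D : ℝ := ∑' t, (τ t - m t) ^ 2 / (w t) ^ 2 with hD_def
  have hDeq : D = ∑' t, f t ^ 2 := by rw [hD_def]; exact tsum_congr hfsq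
  have hD0 : 0 ≤ D := by rw [hDeq]; exact tsum_nonneg fun t => sq_nonneg _
  -- upper bound for any admissible r
  have hub : ∀ r ∈ { r : ℝ | ∃ h : T → ℝ,
        Summable (fun t => h t * (τ t - m t)) ∧
        Summable (fun t => (h t) ^ 2 * (w t) ^ 2) ∧
        (∑' t, (h t) ^ 2 * (w t) ^ 2) ≤ 1 ∧
        r = ∑' t, h t * (τ t - m t) }, r ≤ Real.sqrt D := by
    rintro r ⟨h, hs1, hs2, hle, rfl⟩
    have habs : Summable fun t => |h t * (τ t - m t)| := hs1.abs
    have key : ∀ t, |h t * (τ t - m t)| = |h t * w t| * |f t| := by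
      intro t
      rw [← abs_mul, hfw t]
      ring_nf
    calc (∑' t, h t * (τ t - m t)) ≤ ∑' t, |h t * (τ t - m t)| :=
          Summable.tsum_le_tsum (fun t => le_abs_self _) hs1 habs
      _ ≤ Real.sqrt D := by
          apply Summable.tsum_le_of_sum_le habs
          intro s
          have cs := Finset.sum_mul_sq_le_sq_mul_sq s (fun t => |h t * w t|) (fun t => |f t|)
          simp only [sq_abs] at cs
          have h1 : (∑ t ∈ s, (h t * w t) ^ 2) ≤ 1 := by
            refine le_trans (Summable.sum_le_tsum (L := SummationFilter.unconditional T) s (fun t _ => sq_nonneg _) ?_) ?_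
            · simpa only [mul_pow] using hs2
            · calc (∑' t, (h t * w t) ^ 2) = ∑' t, (h t) ^ 2 * (w t) ^ 2 := by
                    simp_rw [mul_pow]
                _ ≤ 1 := hle
          have h2 : (∑ t ∈ s, (f t) ^ 2) ≤ D := by
            rw [hDeq]; exact Summable.sum_le_tsum s (fun t _ => sq_nonneg _) hDf
          have hsum_nonneg : 0 ≤ ∑ t ∈ s, |h t * w t| * |f t| :=
            Finset.sum_nonneg fun t _ => mul_nonneg (abs_nonneg _) (abs_nonneg _)
          have hsq : (∑ t ∈ s, |h t * w t| * |f t|) ^ 2 ≤ D := by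
            refine le_trans cs ?_
            calc (∑ t ∈ s, (h t * w t) ^ 2) * (∑ t ∈ s, (f t) ^ 2) ≤ 1 * D :=
                mul_le_mul h1 h2 (Finset.sum_nonneg fun t _ => sq_nonneg _) zero_le_one
              _ = D := one_mul _
          calc (∑ t ∈ s, |h t * (τ t - m t)|) = ∑ t ∈ s, |h t * w t| * |f t| :=
                Finset.sum_congr rfl fun t _ => key t
            _ ≤ Real.sqrt D := by
                nlinarith [Real.sq_sqrt hD0, Real.sqrt_nonneg D, hsum_nonneg]
  -- the optimizer attains √D
  have hmem : Real.sqrt D ∈ { r : ℝ | ∃ h : T → ℝ,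
        Summable (fun t => h t * (τ t - m t)) ∧
        Summable (fun t => (h t) ^ 2 * (w t) ^ 2) ∧
        (∑' t, (h t) ^ 2 * (w t) ^ 2) ≤ 1 ∧
        r = ∑' t, h t * (τ t - m t) } := by
    have e1 : ∀ t, (f t / (w t * Real.sqrt D)) * (τ t - m t) = f t ^ 2 / Real.sqrt D := by
      intro t
      rw [hfw t]
      exact bwhd_aux1 _ _ _ (hwne t)
    have e2 : ∀ t, (f t / (w t * Real.sqrt D)) ^ 2 * (w t) ^ 2 = f t ^ 2 / D :=
      fun t => bwhd_aux2 _ _ _ (hwne t) hD0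
    refine ⟨fun t => f t / (w t * Real.sqrt D), ?_, ?_, ?_, ?_⟩
    · simp only [e1]
      exact hDf.div_const _
    · simp only [e2]
      exact hDf.div_const _
    · simp only [e2]
      rw [tsum_div_const, ← hDeq]
      rcases eq_or_ne D 0 with hz | hz
      · simp [hz]
      · rw [div_self hz]
    · simp only [e1]
      rw [tsum_div_const, ← hDeq, Real.div_sqrt]
  constructor
  · exact le_antisymm (csSup_le ⟨_, hmem⟩ hub) (le_csSup ⟨_, hub⟩ hmem)
  · have hhalf : (∑' t, (τ t - m t) ^ 2 / (2 * (w t) ^ 2)) = D / 2 := by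
      rw [hD_def, ← tsum_div_const]
      refine tsum_congr fun t => ?_
      rw [div_div]
      ring_nf
    have h2 : Real.sqrt 2 * Real.sqrt (D / 2) = Real.sqrt D := by
      rw [← Real.sqrt_mul (by norm_num : (0:ℝ) ≤ 2)]
      congr 1
      ring
    rw [hhalf, h2]
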